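/- Implicit power series theorem (formal counterpart of the Implicit Species Theorem): if every H_i has zero constant coefficient and the Jacobian matrix at the origin J₀ is nilpotent, then the system Y = H(z,Y) admits exactly one solution S = (S_1,…,S_m) consisting of formal power series in z over R with zero constant coefficients; i.e., there is a unique such vector S with S_i = H_i(z, S_1, …, S_m) for all i. -/

import Mathlib

/-- Substitution of a family `s` of one-variable formal power series (each intended to have
zero constant coefficient) into a multivariate formal power series `H` in `k` variables:
the coefficient of `z^n` in `H(s)` is the (finite) sum over all monomials `d` of the
coefficient of `d` in `H` times the coefficient of `z^n` in `∏ j, (s j) ^ (d j)`.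
When every `s j` has zero constant coefficient, only monomials `d` with
`∑ j, d j ≤ n` (in particular `d ≤ (n, …, n)`) can contribute, so this is the usual
well-defined substitution. -/
noncomputable def mvSubst {R : Type*} [CommSemiring R] {k : ℕ}
    (H : MvPowerSeries (Fin k) R) (s : Fin k → PowerSeries R) : PowerSeries R :=
  PowerSeries.mk fun n =>
    ∑ d ∈ Finset.Iic (Finsupp.equivFunOnFinite.symm fun _ : Fin k => n),
      MvPowerSeries.coeff d H * PowerSeries.coeff n (∏ j, (s j) ^ (d j))

namespace ImplicitAux

open PowerSeries

variable {R : Type*} [CommRing R] {k : ℕ}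

lemma coeff_mvSubst (H : MvPowerSeries (Fin k) R) (s : Fin k → PowerSeries R) (n : ℕ) :
    PowerSeries.coeff n (mvSubst H s) =
      ∑ d ∈ Finset.Iic (Finsupp.equivFunOnFinite.symm fun _ : Fin k => n),
        MvPowerSeries.coeff d H * PowerSeries.coeff n (∏ j, (s j) ^ (d j)) := by
  simp [mvSubst]

lemma coeff_prod_pow_eq_zero (s : Fin k → PowerSeries R)
    (hs : ∀ j, constantCoeff (s j) = 0) (d : Fin k → ℕ) {n : ℕ}
    (hn : n < ∑ j, d j) :
    PowerSeries.coeff n (∏ j, s j ^ d j) = 0 := by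
  have hdvd : (X : PowerSeries R) ^ (∑ j, d j) ∣ ∏ j, s j ^ d j := by
    rw [← Finset.prod_pow_eq_pow_sum]
    exact Finset.prod_dvd_prod_of_dvd _ _ fun j _ =>
      pow_dvd_pow_of_dvd (X_dvd_iff.2 (hs j)) _
  exact X_pow_dvd_iff.1 hdvd n hn

lemma prod_pow_update (s : Fin k → PowerSeries R) (d : Fin k → ℕ) (j0 : Fin k)
    (h : d j0 ≠ 0) :
    ∏ j, s j ^ d j = s j0 * ∏ j, s j ^ (Function.update d j0 (d j0 - 1)) j := by
  classical
  rw [← Finset.mul_prod_erase Finset.univ (fun j => s j ^ d j) (Finset.mem_univ j0),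
      ← Finset.mul_prod_erase Finset.univ
        (fun j => s j ^ (Function.update d j0 (d j0 - 1)) j) (Finset.mem_univ j0),
      Function.update_self, ← mul_assoc]
  congr 1
  · rw [← pow_succ']
    congr 1
    omega
  · exact Finset.prod_congr rfl fun j hj => by
      rw [Function.update_of_ne (Finset.ne_of_mem_erase hj)]

lemma sum_update (d : Fin k → ℕ) (j0 : Fin k) (h : d j0 ≠ 0) :
    ∑ j, (Function.update d j0 (d j0 - 1)) j = (∑ j, d j) - 1 := by
  classical
  rw [Finset.sum_update_of_mem (Finset.mem_univ j0), Finset.sdiff_singleton_eq_erase,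
      ← Finset.add_sum_erase Finset.univ d (Finset.mem_univ j0)]
  omega

lemma coeff_prod_pow_congr (r : ℕ) (hr : 1 ≤ r) :
    ∀ (n : ℕ) (d : Fin k → ℕ) (s t : Fin k → PowerSeries R),
      (∀ j, constantCoeff (s j) = 0) → (∀ j, constantCoeff (t j) = 0) →
      (∑ j, d j = r) →
      (∀ j i, i + r ≤ n + 1 → PowerSeries.coeff i (s j) = PowerSeries.coeff i (t j)) →
      PowerSeries.coeff n (∏ j, s j ^ d j) = PowerSeries.coeff n (∏ j, t j ^ d j) := by
  induction r, hr using Nat.le_induction with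
  | base =>
    intro n d s t hs ht hd hagree
    obtain ⟨j0, -, hj0⟩ := Finset.exists_ne_zero_of_sum_ne_zero
      (f := d) (by rw [hd]; norm_num)
    rw [prod_pow_update s d j0 hj0, prod_pow_update t d j0 hj0]
    have hsum : ∑ j, (Function.update d j0 (d j0 - 1)) j = 0 := by
      rw [sum_update d j0 hj0, hd]
    have hz : ∀ j, (Function.update d j0 (d j0 - 1)) j = 0 := fun j =>
      (Finset.sum_eq_zero_iff.1 hsum) j (Finset.mem_univ j)
    simp only [hz, pow_zero, Finset.prod_const_one, mul_one]
    exact hagree j0 n (by omega)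
  | succ r hr IH =>
    intro n d s t hs ht hd hagree
    obtain ⟨j0, -, hj0⟩ := Finset.exists_ne_zero_of_sum_ne_zero
      (f := d) (by rw [hd]; omega)
    rw [prod_pow_update s d j0 hj0, prod_pow_update t d j0 hj0]
    set d' := Function.update d j0 (d j0 - 1) with hd'def
    have hsum' : ∑ j, d' j = r := by
      rw [hd'def, sum_update d j0 hj0, hd]; omega
    rw [PowerSeries.coeff_mul, PowerSeries.coeff_mul]
    apply Finset.sum_congr rfl
    rintro ⟨a, b⟩ hab
    rw [Finset.HasAntidiagonal.mem_antidiagonal] at hab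
    simp only
    rcases Nat.eq_zero_or_pos a with rfl | ha
    · have h1 : PowerSeries.coeff 0 (s j0) = 0 := by
        rw [PowerSeries.coeff_zero_eq_constantCoeff_apply]; exact hs j0
      have h2 : PowerSeries.coeff 0 (t j0) = 0 := by
        rw [PowerSeries.coeff_zero_eq_constantCoeff_apply]; exact ht j0
      rw [h1, h2, zero_mul, zero_mul]
    · rcases lt_or_ge b r with hb | hb
      · rw [coeff_prod_pow_eq_zero s hs d' (by rw [hsum']; exact hb),
            coeff_prod_pow_eq_zero t ht d' (by rw [hsum']; exact hb), mul_zero, mul_zero]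
      · have h1 : PowerSeries.coeff a (s j0) = PowerSeries.coeff a (t j0) :=
          hagree j0 a (by omega)
        have h2 := IH b d' s t hs ht hsum' (fun j i hi => hagree j i (by omega))
        rw [h1, h2]

lemma coeff_mvSubst_congr (H : MvPowerSeries (Fin k) R) (s t : Fin k → PowerSeries R)
    (hs : ∀ j, constantCoeff (s j) = 0) (ht : ∀ j, constantCoeff (t j) = 0)
    (n : ℕ)
    (hagree : ∀ j i, i ≤ n → PowerSeries.coeff i (s j) = PowerSeries.coeff i (t j)) :
    PowerSeries.coeff n (mvSubst H s) = PowerSeries.coeff n (mvSubst H t) := by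
  rw [coeff_mvSubst, coeff_mvSubst]
  refine Finset.sum_congr rfl fun d _ => ?_
  congr 1
  rcases Nat.eq_zero_or_pos (∑ j, d j) with h0 | h0
  · have hz : ∀ j, d j = 0 := fun j => (Finset.sum_eq_zero_iff.1 h0) j (Finset.mem_univ j)
    simp [hz]
  · refine coeff_prod_pow_congr (∑ j, d j) h0 n (fun j => d j) s t hs ht rfl ?_
    intro j i hi
    exact hagree j i (by omega)

lemma prod_pow_single (s : Fin k → PowerSeries R) (j0 : Fin k) :
    ∏ j, s j ^ ((Finsupp.single j0 (1 : ℕ)) j) = s j0 := by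
  rw [Finset.prod_eq_single j0
    (fun j _ hj => by rw [Finsupp.single_eq_of_ne' (Ne.symm hj), pow_zero])
    (fun h => absurd (Finset.mem_univ j0) h)]
  rw [Finsupp.single_eq_same, pow_one]

lemma eq_single_of_sum_eq_one {d : Fin k →₀ ℕ} (h : ∑ j, d j = 1) :
    ∃ j0, d = Finsupp.single j0 1 := by
  obtain ⟨j0, -, hj0⟩ := Finset.exists_ne_zero_of_sum_ne_zero
    (f := fun j => d j) (show (∑ j, d j) ≠ 0 by omega)
  refine ⟨j0, Finsupp.ext fun j => ?_⟩
  have hle : d j0 ≤ 1 := by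
    have h1 : d j0 ≤ ∑ i, d i := Finset.single_le_sum (f := fun j => d j)
      (fun i _ => Nat.zero_le _) (Finset.mem_univ j0)
    omega
  rcases eq_or_ne j j0 with rfl | hj
  · rw [Finsupp.single_eq_same]; omega
  · rw [Finsupp.single_eq_of_ne' (Ne.symm hj)]
    by_contra hne
    have h2 : d j0 + d j ≤ ∑ i, d i := by
      rw [← Finset.sum_pair (Ne.symm hj)]
      exact Finset.sum_le_sum_of_subset (Finset.subset_univ _)
    omega

variable {m : ℕ}

lemma cons_constantCoeff (S : Fin m → PowerSeries R)
    (hS : ∀ j, constantCoeff (S j) = 0) :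
    ∀ j, constantCoeff ((Fin.cons X S : Fin (m + 1) → PowerSeries R) j) = 0 := by
  intro j
  refine Fin.cases ?_ ?_ j
  · rw [Fin.cons_zero]; exact PowerSeries.constantCoeff_X
  · intro i; rw [Fin.cons_succ]; exact hS i

lemma cons_agree (S T : Fin m → PowerSeries R) (n : ℕ)
    (h : ∀ j i, i ≤ n → PowerSeries.coeff i (S j) = PowerSeries.coeff i (T j)) :
    ∀ j i, i ≤ n →
      PowerSeries.coeff i ((Fin.cons X S : Fin (m + 1) → PowerSeries R) j)
        = PowerSeries.coeff i ((Fin.cons X T : Fin (m + 1) → PowerSeries R) j) := by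
  intro j
  refine Fin.cases ?_ ?_ j
  · intro i _; rw [Fin.cons_zero, Fin.cons_zero]
  · intro j' i hi; rw [Fin.cons_succ, Fin.cons_succ]; exact h j' i hi

/-- Key linearization lemma: if `S` and `T` agree up to order `n` then the coefficients at
order `n+1` of the substitutions differ exactly by the Jacobian applied to the difference. -/
lemma coeff_succ_mvSubst_sub (H : MvPowerSeries (Fin (m + 1)) R)
    (S T : Fin m → PowerSeries R)
    (hS : ∀ j, constantCoeff (S j) = 0) (hT : ∀ j, constantCoeff (T j) = 0)
    (n : ℕ)
    (hagree : ∀ j i, i ≤ n → PowerSeries.coeff i (S j) = PowerSeries.coeff i (T j)) :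
    PowerSeries.coeff (n + 1) (mvSubst H (Fin.cons X S))
        - PowerSeries.coeff (n + 1) (mvSubst H (Fin.cons X T))
      = ∑ j, MvPowerSeries.coeff (Finsupp.single j.succ 1) H
          * (PowerSeries.coeff (n + 1) (S j) - PowerSeries.coeff (n + 1) (T j)) := by
  classical
  have hsc := cons_constantCoeff S hS
  have htc := cons_constantCoeff T hT
  rw [coeff_mvSubst, coeff_mvSubst, ← Finset.sum_sub_distrib]
  set c : Fin (m + 1) →₀ ℕ := Finsupp.equivFunOnFinite.symm fun _ => (n + 1) with hc
  set A : Finset (Fin (m + 1) →₀ ℕ) :=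
    Finset.image (fun j : Fin m => Finsupp.single j.succ 1) Finset.univ with hA
  have hAsub : A ⊆ Finset.Iic c := by
    intro d hd
    rw [hA, Finset.mem_image] at hd
    obtain ⟨j, -, rfl⟩ := hd
    rw [Finset.mem_Iic, Finsupp.le_def]
    intro i
    have hci : c i = n + 1 := by rw [hc]; simp
    rw [hci, Finsupp.single_apply]
    split <;> omega
  have hvanish : ∀ d ∈ Finset.Iic c, d ∉ A →
      MvPowerSeries.coeff d H
          * PowerSeries.coeff (n + 1) (∏ j, (Fin.cons X S : Fin (m+1) → _) j ^ d j)
        - MvPowerSeries.coeff d H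
          * PowerSeries.coeff (n + 1) (∏ j, (Fin.cons X T : Fin (m+1) → _) j ^ d j) = 0 := by
    intro d _ hdA
    have key : PowerSeries.coeff (n + 1) (∏ j, (Fin.cons X S : Fin (m+1) → _) j ^ d j)
        = PowerSeries.coeff (n + 1) (∏ j, (Fin.cons X T : Fin (m+1) → _) j ^ d j) := by
      rcases hsum : (∑ j, d j) with _ | _ | r
      · have hz : ∀ j, d j = 0 := fun j =>
          (Finset.sum_eq_zero_iff.1 hsum) j (Finset.mem_univ j)
        simp [hz]
      · obtain ⟨j0, rfl⟩ := eq_single_of_sum_eq_one hsum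
        obtain rfl | ⟨j, rfl⟩ := Fin.eq_zero_or_eq_succ j0
        · rw [prod_pow_single, prod_pow_single, Fin.cons_zero, Fin.cons_zero]
        · exact absurd (by
            rw [hA, Finset.mem_image]
            exact ⟨j, Finset.mem_univ j, rfl⟩) hdA
      · refine coeff_prod_pow_congr (r + 2) (by omega) (n + 1) (fun j => d j) _ _ hsc htc
          hsum ?_
        intro j i hi
        exact cons_agree S T n hagree j i (by omega)
    rw [key, sub_self]
  rw [← Finset.sum_subset hAsub hvanish, hA,
    Finset.sum_image (fun a _ b _ h =>
      Fin.succ_injective m ((Finsupp.single_left_inj one_ne_zero).1 h))]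
  refine Finset.sum_congr rfl fun j _ => ?_
  rw [prod_pow_single (Fin.cons X S) j.succ, prod_pow_single (Fin.cons X T) j.succ,
    Fin.cons_succ, Fin.cons_succ, mul_sub]

lemma coeff_zero_mvSubst (H : MvPowerSeries (Fin k) R) (s : Fin k → PowerSeries R) :
    PowerSeries.coeff 0 (mvSubst H s) = MvPowerSeries.coeff 0 H := by
  rw [coeff_mvSubst]
  have h0 : (Finsupp.equivFunOnFinite.symm fun _ : Fin k => (0 : ℕ)) = 0 := by
    ext j; simp
  rw [h0, show (Finset.Iic (0 : Fin k →₀ ℕ)) = {0} by ext d; simp]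
  simp

end ImplicitAux

open ImplicitAux PowerSeries in
/-- **Implicit power series theorem.**  If every `H i` has zero constant coefficient and the
Jacobian matrix at the origin (the matrix of coefficients of the degree-one monomials `y j`
in `H i`) is nilpotent, the system `Y = H(z, Y)` has exactly one solution consisting of
power series with zero constant coefficients.  Here the variable of index `0` is `z` and the
variable of index `j.succ` is `y j`. -/
theorem implicit_power_series_theorem {R : Type*} [CommRing R] {m : ℕ} (hm : 1 ≤ m)
    (H : Fin m → MvPowerSeries (Fin (m + 1)) R)
    (hH0 : ∀ i, MvPowerSeries.coeff 0 (H i) = 0)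
    (hJ : IsNilpotent (Matrix.of fun i j : Fin m =>
      MvPowerSeries.coeff (Finsupp.single j.succ 1) (H i))) :
    ∃! S : Fin m → PowerSeries R,
      (∀ i, PowerSeries.constantCoeff (S i) = 0) ∧
      (∀ i, S i = mvSubst (H i) (Fin.cons PowerSeries.X S)) := by
  classical
  obtain ⟨N0, hN0⟩ := hJ
  set J : Matrix (Fin m) (Fin m) R :=
    Matrix.of fun i j => MvPowerSeries.coeff (Finsupp.single j.succ 1) (H i) with hJdef
  set N : ℕ := N0 + 1 with hNdef
  have hJN : J ^ N = 0 := by rw [hNdef, pow_succ, hN0, zero_mul]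
  set F : (Fin m → PowerSeries R) → Fin m → PowerSeries R :=
    fun S i => mvSubst (H i) (Fin.cons PowerSeries.X S) with hFdef
  -- congruence for F
  have hFcong : ∀ (S T : Fin m → PowerSeries R),
      (∀ j, constantCoeff (S j) = 0) → (∀ j, constantCoeff (T j) = 0) →
      ∀ n, (∀ j i, i ≤ n → coeff i (S j) = coeff i (T j)) →
      ∀ i, coeff n (F S i) = coeff n (F T i) := by
    intro S T hS hT n hag i
    exact coeff_mvSubst_congr (H i) _ _ (cons_constantCoeff S hS)
      (cons_constantCoeff T hT) n (cons_agree S T n hag)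
  -- linearization for F
  have hdiff : ∀ (S T : Fin m → PowerSeries R),
      (∀ j, constantCoeff (S j) = 0) → (∀ j, constantCoeff (T j) = 0) →
      ∀ n, (∀ j i, i ≤ n → coeff i (S j) = coeff i (T j)) →
      (fun i => coeff (n + 1) (F S i) - coeff (n + 1) (F T i))
        = J.mulVec (fun j => coeff (n + 1) (S j) - coeff (n + 1) (T j)) := by
    intro S T hS hT n hag
    funext i
    simp only [Matrix.mulVec, dotProduct, hJdef, Matrix.of_apply]
    exact coeff_succ_mvSubst_sub (H i) S T hS hT n hag
  -- nilpotency kills fixed vectors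
  have hkill : ∀ v : Fin m → R, v = J.mulVec v → v = 0 := by
    intro v hv
    have hpow : ∀ t, v = (J ^ t).mulVec v := by
      intro t
      induction t with
      | zero => rw [pow_zero, Matrix.one_mulVec]
      | succ t ih =>
        calc v = J.mulVec v := hv
        _ = J.mulVec ((J ^ t).mulVec v) := by rw [← ih]
        _ = (J * J ^ t).mulVec v := Matrix.mulVec_mulVec v J (J ^ t)
        _ = (J ^ (t + 1)).mulVec v := by rw [← pow_succ']
    have := hpow N
    rwa [hJN, Matrix.zero_mulVec] at this
  -- uniqueness
  have uniq : ∀ S T : Fin m → PowerSeries R,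
      (∀ i, constantCoeff (S i) = 0) → (∀ i, S i = F S i) →
      (∀ i, constantCoeff (T i) = 0) → (∀ i, T i = F T i) →
      S = T := by
    intro S T hS0 hSfix hT0 hTfix
    have key : ∀ n j, coeff n (S j) = coeff n (T j) := by
      intro n
      induction n using Nat.strong_induction_on with
      | _ n ih =>
        match n with
        | 0 =>
          intro j
          rw [coeff_zero_eq_constantCoeff_apply, coeff_zero_eq_constantCoeff_apply,
            hS0 j, hT0 j]
        | Nat.succ n =>
          have hagr : ∀ j i, i ≤ n → coeff i (S j) = coeff i (T j) :=
            fun j i hi => ih i (by omega) j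
          have hv := hdiff S T hS0 hT0 n hagr
          have hfix' : (fun i => coeff (n + 1) (F S i) - coeff (n + 1) (F T i))
              = fun j => coeff (n + 1) (S j) - coeff (n + 1) (T j) := by
            funext i; rw [← hSfix i, ← hTfix i]
          have hveq : (fun j => coeff (n + 1) (S j) - coeff (n + 1) (T j))
              = J.mulVec (fun j => coeff (n + 1) (S j) - coeff (n + 1) (T j)) :=
            hfix'.symm.trans hv
          have hz := hkill _ hveq
          intro j
          have := congrFun hz j
          simpa [sub_eq_zero] using this
    exact funext fun j => PowerSeries.ext fun n => key n j
  -- construction of the solution by iteration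
  set T : ℕ → Fin m → PowerSeries R := fun t => F^[t] (fun _ => 0) with hTdef
  have hTsucc : ∀ t, T (t + 1) = F (T t) := fun t => Function.iterate_succ_apply' F t _
  have hT0c : ∀ t j, constantCoeff (T t j) = 0 := by
    intro t
    cases t with
    | zero => intro j; simp [hTdef]
    | succ t =>
      intro j
      rw [hTsucc t, ← coeff_zero_eq_constantCoeff_apply]
      rw [show F (T t) j = mvSubst (H j) (Fin.cons PowerSeries.X (T t)) from rfl]
      rw [coeff_zero_mvSubst]
      exact hH0 j
  -- contact growth claim
  have hcontact : ∀ n t, N * n ≤ t → ∀ j i, i ≤ n →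
      coeff i (T (t + 1) j) = coeff i (T t j) := by
    intro n
    induction n with
    | zero =>
      intro t _ j i hi
      rw [Nat.le_zero] at hi; subst hi
      rw [coeff_zero_eq_constantCoeff_apply, coeff_zero_eq_constantCoeff_apply,
        hT0c, hT0c]
    | succ n ih =>
      intro t ht j i hi
      have hmono : N * n ≤ N * (n + 1) := Nat.mul_le_mul le_rfl (Nat.le_succ n)
      rcases Nat.lt_or_ge i (n + 1) with hlt | hge
      · exact ih t (le_trans hmono ht) j i (by omega)
      · have hieq : i = n + 1 := by omega
        subst hieq
        set w : ℕ → Fin m → R := fun u j =>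
          coeff (n + 1) (T (N * n + u + 1) j) - coeff (n + 1) (T (N * n + u) j) with hw
        have hwstep : ∀ u, w (u + 1) = J.mulVec (w u) := by
          intro u
          have hag : ∀ j i, i ≤ n →
              coeff i (T (N * n + u + 1) j) = coeff i (T (N * n + u) j) :=
            ih (N * n + u) (Nat.le_add_right _ _)
          have hd := hdiff (T (N * n + u + 1)) (T (N * n + u)) (hT0c _) (hT0c _) n hag
          have e : w (u + 1) = fun i =>
              coeff (n + 1) (F (T (N * n + u + 1)) i)
                - coeff (n + 1) (F (T (N * n + u)) i) := by
            funext i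
            show coeff (n + 1) (T (N * n + u + 1 + 1) i)
                - coeff (n + 1) (T (N * n + u + 1) i) = _
            rw [hTsucc (N * n + u + 1), hTsucc (N * n + u)]
          rw [e, hd]
        have hwpow : ∀ u, w u = (J ^ u).mulVec (w 0) := by
          intro u
          induction u with
          | zero => rw [pow_zero, Matrix.one_mulVec]
          | succ u ihu =>
            rw [hwstep u, ihu, Matrix.mulVec_mulVec, ← pow_succ']
        have hNn : N * (n + 1) = N * n + N := Nat.mul_succ N n
        obtain ⟨u, rfl⟩ : ∃ u, t = N * n + u := ⟨t - N * n, by omega⟩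
        have huN : N ≤ u := by omega
        have hwz : w u = 0 := by
          rw [hwpow u, show u = N + (u - N) by omega, pow_add, hJN, zero_mul,
            Matrix.zero_mulVec]
        have := congrFun hwz j
        rw [hw] at this
        simp only [Pi.zero_apply, sub_eq_zero] at this
        exact this
  -- stabilization
  have hstab : ∀ n j t, N * n ≤ t → coeff n (T t j) = coeff n (T (N * n) j) := by
    intro n j t ht
    induction t, ht using Nat.le_induction with
    | base => rfl
    | succ t ht iht => rw [hcontact n t ht j n le_rfl, iht]
  set S : Fin m → PowerSeries R := fun j =>
    PowerSeries.mk fun n => coeff n (T (N * n) j) with hSdef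
  have h3 : ∀ n j t, N * n ≤ t → coeff n (S j) = coeff n (T t j) := by
    intro n j t ht
    rw [hSdef]
    simp only [coeff_mk]
    exact (hstab n j t ht).symm
  have hSc : ∀ j, constantCoeff (S j) = 0 := by
    intro j
    rw [← coeff_zero_eq_constantCoeff_apply, h3 0 j 0 (by omega),
      coeff_zero_eq_constantCoeff_apply]
    exact hT0c 0 j
  have hSfix : ∀ i, S i = F S i := by
    intro i
    refine PowerSeries.ext fun n => ?_
    have h4 : coeff n (S i) = coeff n (T (N * n + 1) i) :=
      h3 n i (N * n + 1) (by omega)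
    rw [h4, hTsucc (N * n)]
    exact hFcong (T (N * n)) S (hT0c _) hSc n
      (fun j i' hi' => (h3 i' j (N * n) (Nat.mul_le_mul le_rfl hi')).symm) i
  refine ⟨S, ⟨hSc, hSfix⟩, ?_⟩
  intro S' hS'
  exact uniq S' S hS'.1 hS'.2 hSc hSfix
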